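/- Order cancellation for convex sets: let A, B, C be subsets of ℝⁿ with A nonempty and compact, C convex, and A + B ⊆ A + C (Minkowski sums). Then B ⊆ C. -/

import Mathlib

open Pointwise
open Module Set in
private theorem cancel_descend {n : ℕ}
    (IH : ∀ (E : Type) [NormedAddCommGroup E] [NormedSpace ℝ E] [FiniteDimensional ℝ E],
      Module.finrank ℝ E ≤ n → ∀ (A C : Set E) (b : E), A.Nonempty → IsCompact A →
      Convex ℝ C → (∀ a ∈ A, a + b ∈ A + C) → b ∈ C)
    {E : Type} [NormedAddCommGroup E] [NormedSpace ℝ E] [FiniteDimensional ℝ E]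
    (hrank : Module.finrank ℝ E ≤ n + 1)
    (f : E →L[ℝ] ℝ) (hf : f ≠ 0) {A' C' : Set E} {b : E}
    (hA'ne : A'.Nonempty) (hA'cpt : IsCompact A') (hC' : Convex ℝ C')
    (hflevA : ∀ a ∈ A', ∀ a' ∈ A', f a = f a')
    (hflevC : ∀ c ∈ C', f c = f b)
    (hsum : ∀ a ∈ A', ∃ a₂ ∈ A', ∃ c₂ ∈ C', a + b = a₂ + c₂) : b ∈ C' := by
  classical
  obtain ⟨a₁, ha₁⟩ := hA'ne
  obtain ⟨_, _, c₀, hc₀, _⟩ := hsum a₁ ha₁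
  set K : Submodule ℝ E := LinearMap.ker (f : E →ₗ[ℝ] ℝ) with hK
  have hKlt : K < ⊤ := by
    rcases lt_or_eq_of_le (le_top : K ≤ ⊤) with h | h
    · exact h
    · exfalso; apply hf
      ext x
      have : x ∈ K := h ▸ Submodule.mem_top
      simpa [hK] using this
  have hKrank : Module.finrank ℝ K ≤ n := by
    have := Submodule.finrank_lt (K := ℝ) hKlt.ne
    omega
  have hmemK : ∀ x : E, x ∈ K ↔ f x = 0 := fun x => by simp [hK, LinearMap.mem_ker]
  -- the translated sets inside the kernel
  set Abar : Set K := {x : K | (x : E) + a₁ ∈ A'} with hAbar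
  set Cbar : Set K := {y : K | (y : E) + c₀ ∈ C'} with hCbar
  have hfb : f b = f c₀ := (hflevC c₀ hc₀).symm
  have hbK : b - c₀ ∈ K := by rw [hmemK]; simp [hfb]
  set bbar : K := ⟨b - c₀, hbK⟩ with hbbar
  -- compactness of Abar
  have hclosed : IsClosed Abar := by
    have : Continuous fun x : K => (x : E) + a₁ := by continuity
    exact hA'cpt.isClosed.preimage this
  have hbdd : Bornology.IsBounded Abar := by
    obtain ⟨R, hR⟩ := hA'cpt.isBounded.exists_norm_le
    rw [isBounded_iff_forall_norm_le]
    refine ⟨R + ‖a₁‖, fun x hx => ?_⟩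
    have h1 : ‖(x : E) + a₁‖ ≤ R := hR _ hx
    have : ‖(x : E)‖ ≤ ‖(x : E) + a₁‖ + ‖a₁‖ := by
      have := norm_add_le ((x : E) + a₁) (-a₁); simpa using this
    calc ‖x‖ = ‖(x : E)‖ := rfl
      _ ≤ ‖(x : E) + a₁‖ + ‖a₁‖ := this
      _ ≤ R + ‖a₁‖ := by linarith
  have hAbarcpt : IsCompact Abar := Metric.isCompact_of_isClosed_isBounded hclosed hbdd
  have hAbarne : Abar.Nonempty := ⟨0, by simpa [hAbar] using ha₁⟩
  -- convexity of Cbar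
  have hCbarcvx : Convex ℝ Cbar := by
    intro y₁ h1 y₂ h2 s t hs ht hst
    show ((s • y₁ + t • y₂ : K) : E) + c₀ ∈ C'
    have key : ((s • y₁ + t • y₂ : K) : E) + c₀
        = s • ((y₁ : E) + c₀) + t • ((y₂ : E) + c₀) := by
      push_cast
      rw [smul_add, smul_add]
      match_scalars <;> linarith
    rw [key]
    exact hC' h1 h2 hs ht hst
  -- the sum condition downstairs
  have hsum' : ∀ x ∈ Abar, x + bbar ∈ Abar + Cbar := by
    intro x hx
    obtain ⟨a₂, ha₂, c₂, hc₂, heq⟩ := hsum ((x : E) + a₁) hx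
    have ha₂K : a₂ - a₁ ∈ K := by
      rw [hmemK]
      have h1 : f a₂ = f a₁ := hflevA a₂ ha₂ a₁ ha₁
      simp [h1]
    have hc₂K : c₂ - c₀ ∈ K := by
      rw [hmemK]
      have h1 : f c₂ = f b := hflevC c₂ hc₂
      simp [h1, hfb]
    refine Set.mem_add.mpr ⟨⟨a₂ - a₁, ha₂K⟩, ?_, ⟨c₂ - c₀, hc₂K⟩, ?_, ?_⟩
    · show (a₂ - a₁) + a₁ ∈ A'; simpa using ha₂
    · show (c₂ - c₀) + c₀ ∈ C'; simpa using hc₂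
    · apply Subtype.ext
      show (a₂ - a₁) + (c₂ - c₀) = (x : E) + (b - c₀)
      have h2 : (x : E) + a₁ + b = a₂ + c₂ := heq
      linear_combination (norm := abel) - h2
  have hb : bbar ∈ Cbar := IH K hKrank Abar Cbar bbar hAbarne hAbarcpt hCbarcvx hsum'
  have : (bbar : E) + c₀ ∈ C' := hb
  simpa [hbbar] using this

open Module Set in
private theorem cancel_aux : ∀ (n : ℕ) (E : Type) [NormedAddCommGroup E] [NormedSpace ℝ E]
    [FiniteDimensional ℝ E], Module.finrank ℝ E ≤ n →
    ∀ (A C : Set E) (b : E), A.Nonempty → IsCompact A → Convex ℝ C →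
    (∀ a ∈ A, a + b ∈ A + C) → b ∈ C := by
  intro n
  induction n with
  | zero =>
    intro E _ _ _ hrank A C b hAne hAcpt hC h
    obtain ⟨a₀, ha₀⟩ := hAne
    obtain ⟨a₂, ha₂, c₂, hc₂, heq⟩ := Set.mem_add.mp (h a₀ ha₀)
    have : Subsingleton E := finrank_zero_iff.mp (le_antisymm hrank (Nat.zero_le _))
    rwa [Subsingleton.elim b c₂]
  | succ n IH =>
    intro E _ _ _ hrank A C b hAne hAcpt hC h
    by_cases hbC : b ∈ C
    · exact hbC
    obtain ⟨a₀, ha₀⟩ := hAne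
    by_cases hint : (interior C).Nonempty
    · -- separation case
      obtain ⟨x₀, hx₀⟩ := hint
      obtain ⟨f, hfsep⟩ := geometric_hahn_banach_open_point hC.interior isOpen_interior
          (fun hb => hbC (interior_subset hb))
      have hf0 : f ≠ 0 := by
        intro h0
        have := hfsep x₀ hx₀
        rw [h0] at this; simp at this
      have hfC : ∀ c ∈ C, f c ≤ f b := by
        intro c hc
        by_contra hlt
        push_neg at hlt
        set d : ℝ := f x₀ - f c with hd
        set t : ℝ := min (1/2) ((f c - f b)/(2*(|d|+1))) with ht
        have habs : (0:ℝ) ≤ |d| := abs_nonneg d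
        have hden : (0:ℝ) < 2*(|d|+1) := by linarith
        have ht0 : 0 < t := lt_min (by norm_num) (div_pos (by linarith) hden)
        have ht2 : t ≤ (f c - f b)/(2*(|d|+1)) := min_le_right _ _
        have ht1 : t ≤ 1/2 := min_le_left _ _
        have hz : t • x₀ + (1-t) • c ∈ interior C :=
          hC.combo_interior_closure_mem_interior hx₀ (subset_closure hc) ht0
            (by linarith) (by ring)
        have hzlt : f (t • x₀ + (1-t) • c) < f b := hfsep _ hz
        have hfz : f (t • x₀ + (1-t) • c) = t * f x₀ + (1-t) * f c := by
          simp [map_add, map_smul, smul_eq_mul]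
        rw [hfz] at hzlt
        have hmul : t * (2*(|d|+1)) ≤ f c - f b := (le_div_iff₀ hden).mp ht2
        have h1 : -d ≤ |d| := neg_le_abs d
        have h2 : d ≤ |d| := le_abs_self d
        nlinarith [mul_le_mul_of_nonneg_left h1 ht0.le, mul_le_mul_of_nonneg_left h2 ht0.le]
      obtain ⟨a₁, ha₁, hmax⟩ := hAcpt.exists_isMaxOn ⟨a₀, ha₀⟩ f.continuous.continuousOn
      set A' : Set E := A ∩ {x | f x = f a₁} with hA'
      set C' : Set E := C ∩ {x | f x = f b} with hC'
      have hA'cpt : IsCompact A' :=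
        hAcpt.inter_right (isClosed_eq f.continuous continuous_const)
      have hC'cvx : Convex ℝ C' :=
        hC.inter (convex_hyperplane (f : E →ₗ[ℝ] ℝ).isLinear (f b))
      have key : ∀ a ∈ A', ∃ a₂ ∈ A', ∃ c₂ ∈ C', a + b = a₂ + c₂ := by
        rintro a ⟨haA, hfa⟩
        obtain ⟨a₂, ha₂, c₂, hc₂, heq⟩ := Set.mem_add.mp (h a haA)
        have hfeq : f a₂ + f c₂ = f a + f b := by
          have := congrArg f heq; simpa [map_add] using this
        have h1 : f a₂ ≤ f a₁ := hmax ha₂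
        have h2 : f c₂ ≤ f b := hfC c₂ hc₂
        have hfa' : f a = f a₁ := hfa
        refine ⟨a₂, ⟨ha₂, by dsimp; linarith⟩, c₂, ⟨hc₂, by dsimp; linarith⟩, heq.symm⟩
      have hb : b ∈ C' := by
        refine cancel_descend IH hrank f hf0 (A' := A') (C' := C') ⟨a₁, ha₁, rfl⟩ hA'cpt hC'cvx ?_ ?_ key
        · rintro x ⟨_, h1⟩ y ⟨_, h2⟩; rw [h1, h2]
        · rintro c ⟨_, h1⟩; exact h1
      exact hb.1
    · -- degenerate case : C lies in a hyperplane
      obtain ⟨a₀', ha₀', c₀, hc₀, heq₀⟩ := Set.mem_add.mp (h a₀ ha₀)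
      have hspan : affineSpan ℝ C ≠ ⊤ := by
        intro htop
        exact hint (hC.interior_nonempty_iff_affineSpan_eq_top.mpr htop)
      set W : Submodule ℝ E := (affineSpan ℝ C).direction with hW
      have hWlt : W < ⊤ := by
        rcases lt_or_eq_of_le (le_top : W ≤ ⊤) with hlt | heqW
        · exact hlt
        · exfalso; apply hspan
          rw [eq_top_iff]
          intro x _
          have hx : x - c₀ ∈ W := heqW ▸ Submodule.mem_top
          have := AffineSubspace.vadd_mem_of_mem_direction hx
            (subset_affineSpan ℝ C hc₀)
          simpa [vadd_eq_add, sub_add_cancel] using this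
      obtain ⟨g, hg0, hgW⟩ := Submodule.exists_dual_map_eq_bot_of_lt_top hWlt inferInstance
      have hgW' : ∀ w ∈ W, g w = 0 := by
        intro w hw
        have : g w ∈ W.map g := Submodule.mem_map_of_mem hw
        rw [hgW] at this
        simpa using this
      set f : E →L[ℝ] ℝ := LinearMap.toContinuousLinearMap g with hfdef
      have hfg : ∀ x, f x = g x := fun x => rfl
      have hf0 : f ≠ 0 := by
        intro h0
        apply hg0
        ext x
        have := congrFun (congrArg (fun F : E →L[ℝ] ℝ => (F : E → ℝ)) h0) x
        simpa [hfg] using this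
      have hCs : ∀ c ∈ C, f c = f c₀ := by
        intro c hc
        have hw : c - c₀ ∈ W := by
          have := AffineSubspace.vsub_mem_direction (subset_affineSpan ℝ C hc)
            (subset_affineSpan ℝ C hc₀)
          simpa [vsub_eq_sub] using this
        have h1 : f (c - c₀) = 0 := by rw [hfg]; exact hgW' _ hw
        rw [map_sub] at h1; linarith
      -- iterate to show f b = f c₀
      have hfb : f b = f c₀ := by
        have hch : ∀ a : ↥A, ∃ a' : ↥A, f (a' : E) = f (a : E) + (f b - f c₀) := by
          rintro ⟨a, ha⟩
          obtain ⟨a₂, ha₂, c₂, hc₂, heq⟩ := Set.mem_add.mp (h a ha)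
          refine ⟨⟨a₂, ha₂⟩, ?_⟩
          have hfeq : f a₂ + f c₂ = f a + f b := by
            have := congrArg f heq; simpa [map_add] using this
          have := hCs c₂ hc₂
          dsimp; linarith
        choose F hF using hch
        set u : ℕ → ↥A := fun k => F^[k] ⟨a₀, ha₀⟩ with hu
        have hval : ∀ k : ℕ, f (u k : E) = f a₀ + k * (f b - f c₀) := by
          intro k
          induction k with
          | zero => simp [hu]
          | succ k ihk =>
            have hstep : u (k+1) = F (u k) := by
              simp [hu, Function.iterate_succ_apply']
            rw [hstep, hF (u k), ihk]
            push_cast; ring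
        obtain ⟨R, hR⟩ := (hAcpt.image f.continuous).isBounded.exists_norm_le
        have hbound : ∀ k : ℕ, |f a₀ + k * (f b - f c₀)| ≤ R := by
          intro k
          rw [← hval k]
          exact hR _ ⟨u k, (u k).2, rfl⟩
        by_contra hne
        have hδ : 0 < |f b - f c₀| := abs_pos.mpr (sub_ne_zero.mpr hne)
        obtain ⟨k, hk⟩ := exists_nat_gt ((R + |f a₀|) / |f b - f c₀|)
        have hk' : (R + |f a₀|) < k * |f b - f c₀| := by
          rw [div_lt_iff₀ hδ] at hk; linarith
        have h2 := abs_sub (f a₀ + (k:ℝ) * (f b - f c₀)) (f a₀)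
        rw [add_sub_cancel_left, abs_mul, Nat.abs_cast] at h2
        have := hbound k
        linarith
      -- now descend
      set A' : Set E := A ∩ {x | f x = f a₀} with hA'
      set C' : Set E := C ∩ {x | f x = f b} with hC'
      have hA'cpt : IsCompact A' :=
        hAcpt.inter_right (isClosed_eq f.continuous continuous_const)
      have hC'cvx : Convex ℝ C' :=
        hC.inter (convex_hyperplane (f : E →ₗ[ℝ] ℝ).isLinear (f b))
      have key : ∀ a ∈ A', ∃ a₂ ∈ A', ∃ c₂ ∈ C', a + b = a₂ + c₂ := by
        rintro a ⟨haA, hfa⟩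
        obtain ⟨a₂, ha₂, c₂, hc₂, heq⟩ := Set.mem_add.mp (h a haA)
        have hfeq : f a₂ + f c₂ = f a + f b := by
          have := congrArg f heq; simpa [map_add] using this
        have h1 : f c₂ = f c₀ := hCs c₂ hc₂
        have hfa' : f a = f a₀ := hfa
        refine ⟨a₂, ⟨ha₂, by dsimp; linarith⟩, c₂, ⟨hc₂, by dsimp; linarith⟩, heq.symm⟩
      have hb : b ∈ C' := by
        refine cancel_descend IH hrank f hf0 (A' := A') (C' := C') ⟨a₀, ha₀, rfl⟩ hA'cpt hC'cvx ?_ ?_ key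
        · rintro x ⟨_, h1⟩ y ⟨_, h2⟩; rw [h1, h2]
        · rintro c ⟨_, h1⟩; exact h1
      exact hb.1

/-- Order cancellation law for Minkowski sums: a nonempty compact summand can be
cancelled against a convex one. -/
theorem order_cancellation {n : ℕ} (A B C : Set (Fin n → ℝ))
    (hAne : A.Nonempty) (hAcpt : IsCompact A) (hCcvx : Convex ℝ C)
    (h : A + B ⊆ A + C) : B ⊆ C := by
  intro x hxB
  exact cancel_aux (Module.finrank ℝ (Fin n → ℝ)) (Fin n → ℝ) le_rfl A C x
    hAne hAcpt hCcvx (fun a ha => h (Set.add_mem_add ha hxB))
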